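/- For every ε > 0 and every positive integer r there is a constant C = C(ε, r) such that for all positive integers q, V and every index 1 ≤ i ≤ 2r the following holds: ∑ gcd(A_i(v), q) ≤ C · V^{2r} · (qV)^{ε}, where the sum runs over all 2r-tuples v = (v_1,…,v_{2r}) of integers with 1 ≤ v_j ≤ V for all j and A_i(v) ≠ 0, and A_i(v) = ∏_{j ≠ i} (v_i − v_j). -/

import Mathlib

open Finset


lemma divBound (δ : ℝ) (hδ : 0 < δ) :
    ∃ C : ℝ, 1 ≤ C ∧ ∀ q : ℕ, 0 < q → ((q.divisors.card : ℝ)) ≤ C * (q : ℝ) ^ δ := by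
  set B : ℕ := ⌈(2:ℝ) ^ (1/δ)⌉₊ with hB
  set K : ℝ := max (1/((2:ℝ)^δ - 1)) 1 with hK
  have hK1 : (1:ℝ) ≤ K := le_max_right _ _
  have h2δ : (1:ℝ) < (2:ℝ)^δ := by
    have := Real.one_lt_rpow_iff_of_pos (x := 2) (by norm_num) (y := δ)
    rw [this]; left; exact ⟨by norm_num, hδ⟩
  refine ⟨K ^ B, one_le_pow₀ hK1, fun q hq => ?_⟩
  -- per-prime bound
  have key : ∀ p ∈ q.primeFactors, ((q.factorization p + 1 : ℕ) : ℝ) ≤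
      (if p < B then K else 1) * (((p:ℝ) ^ δ) ^ (q.factorization p)) := by
    intro p hp
    have hpp : p.Prime := Nat.prime_of_mem_primeFactors hp
    have hp2 : (2:ℝ) ≤ (p:ℝ) := by exact_mod_cast hpp.two_le
    set a := q.factorization p
    by_cases hpB : p < B
    · simp only [hpB, if_true]
      have h1 : ((2:ℝ)^δ) ^ a ≤ ((p:ℝ)^δ) ^ a := by
        apply pow_le_pow_left₀ (Real.rpow_nonneg (by norm_num) _)
        exact Real.rpow_le_rpow (by norm_num) hp2 hδ.le
      have h2 : (1 : ℝ) + a * ((2:ℝ)^δ - 1) ≤ ((2:ℝ)^δ) ^ a := by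
        have := one_add_mul_le_pow (a := (2:ℝ)^δ - 1) (by linarith) a
        simpa using this
      have h3 : ((a:ℝ) + 1) ≤ K * (1 + a * ((2:ℝ)^δ - 1)) := by
        have hKa : 1 ≤ K * ((2:ℝ)^δ - 1) := by
          have h' : 1/((2:ℝ)^δ - 1) ≤ K := le_max_left _ _
          calc (1:ℝ) = (1/((2:ℝ)^δ - 1)) * ((2:ℝ)^δ - 1) := by
                rw [one_div, inv_mul_cancel₀ (by linarith)]
            _ ≤ K * ((2:ℝ)^δ - 1) := by
                apply mul_le_mul_of_nonneg_right h' (by linarith)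
        have ha : (0:ℝ) ≤ a := Nat.cast_nonneg a
        calc ((a:ℝ) + 1) ≤ K + (a:ℝ) * (K * ((2:ℝ)^δ - 1)) := by nlinarith
          _ = K * (1 + a * ((2:ℝ)^δ - 1)) := by ring
      push_cast
      calc ((a:ℝ) + 1) ≤ K * (1 + a * ((2:ℝ)^δ - 1)) := h3
        _ ≤ K * (((2:ℝ)^δ) ^ a) := by
            apply mul_le_mul_of_nonneg_left h2 (by linarith)
        _ ≤ K * (((p:ℝ)^δ) ^ a) := by
            apply mul_le_mul_of_nonneg_left h1 (by linarith)
    · simp only [hpB, if_false, one_mul]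
      have hpB' : (2:ℝ)^(1/δ) ≤ (p:ℝ) := by
        have hbp : B ≤ p := le_of_not_gt hpB
        calc (2:ℝ)^(1/δ) ≤ (B:ℝ) := Nat.le_ceil _
          _ ≤ (p:ℝ) := by exact_mod_cast hbp
      have h2le : (2:ℝ) ≤ (p:ℝ)^δ := by
        have := Real.rpow_le_rpow (Real.rpow_nonneg (by norm_num) _) hpB' hδ.le
        rwa [← Real.rpow_mul (by norm_num), one_div_mul_cancel hδ.ne', Real.rpow_one] at this
      have hn : ((a:ℝ) + 1) ≤ (2:ℝ) ^ a := by
        have h' : (a + 1 : ℕ) ≤ 2 ^ a := Nat.lt_two_pow_self (n := a)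
        exact_mod_cast h'
      push_cast
      calc ((a:ℝ) + 1) ≤ (2:ℝ) ^ a := hn
        _ ≤ ((p:ℝ)^δ) ^ a := pow_le_pow_left₀ (by norm_num) h2le a
  -- assemble
  have hq0 : q ≠ 0 := hq.ne'
  have hcard : (q.divisors.card : ℝ) = ∏ p ∈ q.primeFactors, ((q.factorization p + 1 : ℕ) : ℝ) := by
    rw [Nat.card_divisors hq0]
    push_cast
    rfl
  have hqδ : (q : ℝ) ^ δ = ∏ p ∈ q.primeFactors, ((p:ℝ)^δ) ^ (q.factorization p) := by
    conv_lhs => rw [← Nat.factorization_prod_pow_eq_self hq0]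
    rw [Nat.prod_factorization_eq_prod_primeFactors]
    push_cast
    rw [← Real.finset_prod_rpow _ _ (fun p _ => by positivity)]
    apply Finset.prod_congr rfl
    intro p hp
    rw [← Real.rpow_natCast (p:ℝ) _, ← Real.rpow_mul (Nat.cast_nonneg p),
      mul_comm, Real.rpow_mul (Nat.cast_nonneg p), Real.rpow_natCast]
  calc (q.divisors.card : ℝ)
      = ∏ p ∈ q.primeFactors, ((q.factorization p + 1 : ℕ) : ℝ) := hcard
    _ ≤ ∏ p ∈ q.primeFactors, ((if p < B then K else 1) * (((p:ℝ)^δ) ^ (q.factorization p))) := by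
        apply Finset.prod_le_prod (fun p _ => by positivity) key
    _ = (∏ p ∈ q.primeFactors, (if p < B then K else 1)) *
          ∏ p ∈ q.primeFactors, ((p:ℝ)^δ) ^ (q.factorization p) := Finset.prod_mul_distrib
    _ ≤ K ^ B * (q : ℝ) ^ δ := by
        rw [← hqδ]
        apply mul_le_mul_of_nonneg_right _ (Real.rpow_nonneg (Nat.cast_nonneg q) δ)
        have hsplit : (∏ p ∈ q.primeFactors, (if p < B then K else 1))
            = K ^ ((q.primeFactors.filter (· < B)).card) := by
          rw [Finset.prod_ite, Finset.prod_const, Finset.prod_const, one_pow, mul_one]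
        rw [hsplit]
        apply pow_le_pow_right₀ hK1
        calc (q.primeFactors.filter (· < B)).card ≤ (Finset.range B).card := by
              apply Finset.card_le_card
              intro p hp
              simp only [Finset.mem_filter] at hp
              exact Finset.mem_range.mpr hp.2
          _ = B := Finset.card_range B


lemma gcdProd {ι : Type*} (q : ℕ) (hq : 0 < q) (s : Finset ι) (f : ι → ℤ) :
    Int.gcd (∏ j ∈ s, f j) (q:ℤ) ≤ ∏ j ∈ s, Int.gcd (f j) (q:ℤ) := by
  classical
  induction s using Finset.cons_induction with
  | empty => simp
  | cons a s ha ih =>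
    rw [Finset.prod_cons, Finset.prod_cons]
    have hdvd : Int.gcd (f a * ∏ j ∈ s, f j) (q:ℤ) ∣
        Int.gcd (f a) (q:ℤ) * Int.gcd (∏ j ∈ s, f j) (q:ℤ) := by
      unfold Int.gcd
      rw [Int.natAbs_mul, Nat.gcd_comm (_ * _), Nat.gcd_comm (f a).natAbs,
        Nat.gcd_comm (∏ j ∈ s, f j).natAbs]
      exact Nat.gcd_mul_right_dvd_mul_gcd _ _ _
    have hpos : 0 < Int.gcd (f a) (q:ℤ) * Int.gcd (∏ j ∈ s, f j) (q:ℤ) := by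
      apply Nat.mul_pos <;>
      · apply Int.gcd_pos_of_ne_zero_right
        exact_mod_cast hq.ne'
    calc Int.gcd (f a * ∏ j ∈ s, f j) (q:ℤ)
        ≤ Int.gcd (f a) (q:ℤ) * Int.gcd (∏ j ∈ s, f j) (q:ℤ) := Nat.le_of_dvd hpos hdvd
      _ ≤ Int.gcd (f a) (q:ℤ) * ∏ j ∈ s, Int.gcd (f j) (q:ℤ) :=
          Nat.mul_le_mul_left _ ih

lemma gcdSumIcc (q V : ℕ) (hq : 0 < q) :
    (∑ n ∈ ((Finset.Icc (-(V:ℤ)) (V:ℤ)).erase 0), Int.gcd n (q:ℤ)) ≤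
      2 * V * q.divisors.card := by
  classical
  set s : Finset ℤ := (Finset.Icc (-(V:ℤ)) (V:ℤ)).erase 0 with hs
  have step1 : ∀ n ∈ s, Int.gcd n (q:ℤ) ≤
      ∑ d ∈ q.divisors, (if (d:ℤ) ∣ n then d else 0) := by
    intro n hn
    have hmem : Int.gcd n (q:ℤ) ∈ q.divisors := by
      rw [Nat.mem_divisors]
      refine ⟨?_, hq.ne'⟩
      have h' : Int.gcd n (q:ℤ) ∣ (q:ℤ).natAbs := Nat.gcd_dvd_right _ _
      simpa using h'
    have hdvd : ((Int.gcd n (q:ℤ) : ℤ)) ∣ n := Int.gcd_dvd_left _ _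
    have := Finset.single_le_sum (s := q.divisors)
      (f := fun d : ℕ => if (d:ℤ) ∣ n then d else 0)
      (fun d _ => Nat.zero_le _) hmem
    simpa [hdvd] using this
  calc (∑ n ∈ s, Int.gcd n (q:ℤ))
      ≤ ∑ n ∈ s, ∑ d ∈ q.divisors, (if (d:ℤ) ∣ n then d else 0) :=
        Finset.sum_le_sum step1
    _ = ∑ d ∈ q.divisors, ∑ n ∈ s, (if (d:ℤ) ∣ n then d else 0) := Finset.sum_comm
    _ ≤ ∑ d ∈ q.divisors, 2 * V := by
        apply Finset.sum_le_sum
        intro d hd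
        have hd0 : 0 < d := Nat.pos_of_mem_divisors hd
        rw [← Finset.sum_filter, Finset.sum_const, smul_eq_mul]
        have hcard : (s.filter (fun n => (d:ℤ) ∣ n)).card ≤ (V / d) * 2 := by
          have h2 : ((Finset.Icc 1 (V / d)) ×ˢ (Finset.univ : Finset Bool)).card
              = (V / d) * 2 := by
            rw [Finset.card_product, Nat.card_Icc]
            simp
          rw [← h2]
          apply Finset.card_le_card_of_injOn
            (fun n => (n.natAbs / d, decide (0 < n)))
          · intro n hn
            simp only [Finset.mem_coe, Finset.mem_filter, hs, Finset.mem_erase, Finset.mem_Icc] at hn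
            obtain ⟨⟨hn0, hnl, hnr⟩, hdn⟩ := hn
            have hdn' : d ∣ n.natAbs := by
              rwa [Int.natCast_dvd] at hdn
            have hVle : n.natAbs ≤ V := by omega
            have hpos : 0 < n.natAbs := by omega
            rw [Finset.mem_coe, Finset.mem_product, Finset.mem_Icc]
            constructor
            · constructor
              · rw [Nat.one_le_div_iff hd0]
                exact Nat.le_of_dvd hpos hdn'
              · exact Nat.div_le_div_right hVle
            · exact Finset.mem_univ _
          · intro n1 h1 n2 h2 he
            simp only [Finset.coe_filter, Set.mem_setOf_eq, hs, Finset.mem_erase,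
              Finset.mem_Icc] at h1 h2
            obtain ⟨⟨h10, _, _⟩, hd1⟩ := h1
            obtain ⟨⟨h20, _, _⟩, hd2⟩ := h2
            have hd1' : d ∣ n1.natAbs := by rwa [Int.natCast_dvd] at hd1
            have hd2' : d ∣ n2.natAbs := by rwa [Int.natCast_dvd] at hd2
            have he1 : n1.natAbs / d = n2.natAbs / d := congrArg Prod.fst he
            have he2 : decide (0 < n1) = decide (0 < n2) := congrArg Prod.snd he
            have habs : n1.natAbs = n2.natAbs := by
              rw [← Nat.div_mul_cancel hd1', ← Nat.div_mul_cancel hd2', he1]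
            have hsign : (0 < n1) ↔ (0 < n2) := by
              constructor <;> intro h
              · by_contra h'
                simp [h, h'] at he2
              · by_contra h'
                simp [h, h'] at he2
            omega
        calc (s.filter (fun n => (d:ℤ) ∣ n)).card * d ≤ ((V / d) * 2) * d :=
              Nat.mul_le_mul_right _ hcard
          _ = 2 * (V / d * d) := by ring
          _ ≤ 2 * V := Nat.mul_le_mul_left _ (Nat.div_mul_le_self _ _)
    _ = q.divisors.card * (2 * V) := by rw [Finset.sum_const, smul_eq_mul]
    _ = 2 * V * q.divisors.card := Nat.mul_comm _ _


lemma factorizeSum {ι : Type*} [Fintype ι] [DecidableEq ι] (i : ι) (t : Finset ℤ)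
    (g : ℤ → ℕ) :
    (∑ w ∈ Fintype.piFinset (fun _ : ι => t), ∏ j ∈ Finset.univ.erase i, g (w j))
      = t.card * (∑ x ∈ t, g x) ^ (Fintype.card ι - 1) := by
  have hpt : ∀ w : ι → ℤ, (∏ j ∈ Finset.univ.erase i, g (w j)) =
      ∏ j, (if j = i then 1 else g (w j)) := by
    intro w
    rw [← Finset.mul_prod_erase Finset.univ _ (Finset.mem_univ i)]
    simp only [if_true, one_mul]
    exact (Finset.prod_congr rfl fun j hj => by simp [Finset.ne_of_mem_erase hj]).symm
  calc (∑ w ∈ Fintype.piFinset (fun _ : ι => t), ∏ j ∈ Finset.univ.erase i, g (w j))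
      = ∑ w ∈ Fintype.piFinset (fun _ : ι => t), ∏ j, (if j = i then 1 else g (w j)) :=
        Finset.sum_congr rfl fun w _ => hpt w
    _ = ∏ j, ∑ x ∈ t, (if j = i then 1 else g x) :=
        (Finset.prod_univ_sum _ fun j x => if j = i then 1 else g x).symm
    _ = (∑ x ∈ t, (1:ℕ)) * ∏ j ∈ Finset.univ.erase i, ∑ x ∈ t, (if j = i then 1 else g x) := by
        rw [← Finset.mul_prod_erase Finset.univ _ (Finset.mem_univ i)]
        simp
    _ = t.card * (∑ x ∈ t, g x) ^ (Fintype.card ι - 1) := by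
        congr 1
        · simp
        · rw [Finset.prod_congr rfl (fun j hj => ?_), Finset.prod_const,
            Finset.card_erase_of_mem (Finset.mem_univ i), Finset.card_univ]
          simp [Finset.ne_of_mem_erase hj]

lemma reindexSum {ι : Type*} [Fintype ι] [DecidableEq ι] (i : ι) (V : ℕ) (hV : 0 < V)
    (g : ℤ → ℕ) :
    (∑ v ∈ Fintype.piFinset (fun _ : ι => Finset.Icc (1:ℤ) (V:ℤ)),
        ∏ j ∈ Finset.univ.erase i, g (v i - v j))
      ≤ ∑ w ∈ Fintype.piFinset (fun _ : ι => Finset.Icc (-(V:ℤ)) (V:ℤ)),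
        ∏ j ∈ Finset.univ.erase i, g (w j) := by
  classical
  set Φ : (ι → ℤ) → (ι → ℤ) := fun v j => if j = i then v i else v i - v j with hΦ
  have hinj : ∀ v₁ ∈ Fintype.piFinset (fun _ : ι => Finset.Icc (1:ℤ) (V:ℤ)),
      ∀ v₂ ∈ Fintype.piFinset (fun _ : ι => Finset.Icc (1:ℤ) (V:ℤ)),
      Φ v₁ = Φ v₂ → v₁ = v₂ := by
    intro v₁ _ v₂ _ he
    have hi : v₁ i = v₂ i := by simpa [hΦ] using congrFun he i
    funext j
    by_cases hji : j = i
    · rw [hji]; exact hi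
    · have h2 : v₁ i - v₁ j = v₂ i - v₂ j := by simpa [hΦ, hji] using congrFun he j
      linarith
  have hsub : (Fintype.piFinset (fun _ : ι => Finset.Icc (1:ℤ) (V:ℤ))).image Φ ⊆
      Fintype.piFinset (fun _ : ι => Finset.Icc (-(V:ℤ)) (V:ℤ)) := by
    intro w hw
    rw [Finset.mem_image] at hw
    obtain ⟨v, hv, rfl⟩ := hw
    rw [Fintype.mem_piFinset] at hv
    rw [Fintype.mem_piFinset]
    intro j
    have hvi := Finset.mem_Icc.mp (hv i)
    have hvj := Finset.mem_Icc.mp (hv j)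
    rw [Finset.mem_Icc]
    by_cases hji : j = i <;> simp only [hΦ, hji, if_true, if_false] <;>
      constructor <;> linarith
  calc (∑ v ∈ Fintype.piFinset (fun _ : ι => Finset.Icc (1:ℤ) (V:ℤ)),
        ∏ j ∈ Finset.univ.erase i, g (v i - v j))
      = ∑ w ∈ (Fintype.piFinset (fun _ : ι => Finset.Icc (1:ℤ) (V:ℤ))).image Φ,
          ∏ j ∈ Finset.univ.erase i, g (w j) := by
        rw [Finset.sum_image hinj]
        refine Finset.sum_congr rfl fun v _ => Finset.prod_congr rfl fun j hj => ?_
        simp [hΦ, Finset.ne_of_mem_erase hj]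
    _ ≤ _ := Finset.sum_le_sum_of_subset hsub

open Classical in
lemma mainNat (r : ℕ) (hr : 0 < r) (q V : ℕ) (hq : 0 < q) (hV : 0 < V) (i : Fin (2 * r)) :
    (∑ v ∈ (Fintype.piFinset fun _ : Fin (2 * r) => Finset.Icc (1 : ℤ) (V : ℤ)).filter
        (fun v : Fin (2 * r) → ℤ => (∏ j ∈ Finset.univ.erase i, (v i - v j)) ≠ 0),
      Int.gcd (∏ j ∈ Finset.univ.erase i, (v i - v j)) (q : ℤ))
    ≤ (2 * V + 1) * (2 * V * q.divisors.card) ^ (2 * r - 1) := by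
  set g : ℤ → ℕ := fun x => if x = 0 then 0 else Int.gcd x (q:ℤ) with hg
  have step1 : (∑ v ∈ (Fintype.piFinset fun _ : Fin (2 * r) =>
        Finset.Icc (1 : ℤ) (V : ℤ)).filter
        (fun v : Fin (2 * r) → ℤ => (∏ j ∈ Finset.univ.erase i, (v i - v j)) ≠ 0),
      Int.gcd (∏ j ∈ Finset.univ.erase i, (v i - v j)) (q : ℤ))
      ≤ ∑ v ∈ (Fintype.piFinset fun _ : Fin (2 * r) => Finset.Icc (1 : ℤ) (V : ℤ)),
        ∏ j ∈ Finset.univ.erase i, g (v i - v j) := by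
    refine le_trans (Finset.sum_le_sum ?_) (Finset.sum_le_sum_of_subset
      (Finset.filter_subset _ _))
    intro v hv
    have hv0 : (∏ j ∈ Finset.univ.erase i, (v i - v j)) ≠ 0 :=
      (Finset.mem_filter.mp hv).2
    rw [Finset.prod_ne_zero_iff] at hv0
    have heq : ∏ j ∈ Finset.univ.erase i, g (v i - v j)
        = ∏ j ∈ Finset.univ.erase i, Int.gcd (v i - v j) (q:ℤ) :=
      Finset.prod_congr rfl fun j hj => by simp only [hg, hv0 j hj, if_false]
    rw [heq]
    exact gcdProd q hq _ _
  have hTle : (∑ x ∈ Finset.Icc (-(V:ℤ)) (V:ℤ), g x) ≤ 2 * V * q.divisors.card := by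
    have hTeq : (∑ x ∈ Finset.Icc (-(V:ℤ)) (V:ℤ), g x)
        = ∑ x ∈ (Finset.Icc (-(V:ℤ)) (V:ℤ)).erase 0, Int.gcd x (q:ℤ) := by
      rw [← Finset.sum_erase _ (show g 0 = 0 by simp [hg])]
      exact Finset.sum_congr rfl fun x hx => by
        simp [hg, Finset.ne_of_mem_erase hx]
    rw [hTeq]
    exact gcdSumIcc q V hq
  have hcardIcc : (Finset.Icc (-(V:ℤ)) (V:ℤ)).card = 2 * V + 1 := by
    clear step1 hTle hg
    clear g
    rw [Int.card_Icc]
    omega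
  calc _ ≤ ∑ v ∈ (Fintype.piFinset fun _ : Fin (2 * r) => Finset.Icc (1 : ℤ) (V : ℤ)),
        ∏ j ∈ Finset.univ.erase i, g (v i - v j) := step1
    _ ≤ ∑ w ∈ (Fintype.piFinset fun _ : Fin (2 * r) => Finset.Icc (-(V:ℤ)) (V:ℤ)),
        ∏ j ∈ Finset.univ.erase i, g (w j) := reindexSum i V hV g
    _ = (Finset.Icc (-(V:ℤ)) (V:ℤ)).card *
        (∑ x ∈ Finset.Icc (-(V:ℤ)) (V:ℤ), g x) ^ (Fintype.card (Fin (2 * r)) - 1) :=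
        factorizeSum i _ g
    _ ≤ (2 * V + 1) * (2 * V * q.divisors.card) ^ (2 * r - 1) := by
        rw [hcardIcc, Fintype.card_fin]
        exact Nat.mul_le_mul_left _ (Nat.pow_le_pow_left hTle _)

open Classical in
theorem stmt14 (ε : ℝ) (hε : 0 < ε) (r : ℕ) (hr : 0 < r) :
    ∃ C : ℝ, ∀ q V : ℕ, 0 < q → 0 < V → ∀ i : Fin (2 * r),
      (∑ v ∈ (Fintype.piFinset fun _ : Fin (2 * r) => Finset.Icc (1 : ℤ) (V : ℤ)).filter
          (fun v : Fin (2 * r) → ℤ => (∏ j ∈ Finset.univ.erase i, (v i - v j)) ≠ 0),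
        (Int.gcd (∏ j ∈ Finset.univ.erase i, (v i - v j)) (q : ℤ) : ℝ)) ≤
      C * (V : ℝ) ^ (2 * r) * ((q : ℝ) * (V : ℝ)) ^ ε := by
  set m : ℕ := 2 * r - 1 with hm
  have hm1 : 1 ≤ m := by omega
  have hm2r : m + 1 = 2 * r := by omega
  have hδ : (0:ℝ) < ε / m := div_pos hε (by exact_mod_cast hm1)
  obtain ⟨C0, hC01, hC0⟩ := divBound (ε / m) hδ
  refine ⟨3 * 2 ^ m * C0 ^ m, fun q V hq hV i => ?_⟩
  have hNat := mainNat r hr q V hq hV i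
  set τ : ℕ := q.divisors.card with hτ
  set S : ℕ := ∑ v ∈ (Fintype.piFinset fun _ : Fin (2 * r) =>
      Finset.Icc (1 : ℤ) (V : ℤ)).filter
      (fun v : Fin (2 * r) → ℤ => (∏ j ∈ Finset.univ.erase i, (v i - v j)) ≠ 0),
    Int.gcd (∏ j ∈ Finset.univ.erase i, (v i - v j)) (q : ℤ) with hS
  have hcast : (∑ v ∈ (Fintype.piFinset fun _ : Fin (2 * r) =>
      Finset.Icc (1 : ℤ) (V : ℤ)).filter
      (fun v : Fin (2 * r) → ℤ => (∏ j ∈ Finset.univ.erase i, (v i - v j)) ≠ 0),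
      (Int.gcd (∏ j ∈ Finset.univ.erase i, (v i - v j)) (q : ℤ) : ℝ)) = (S : ℝ) := by
    rw [hS]
    push_cast
    rfl
  rw [hcast]
  have hNatR : (S : ℝ) ≤ (2 * (V:ℝ) + 1) * (2 * (V:ℝ) * (τ:ℝ)) ^ m := by
    have h' : (S:ℝ) ≤ (((2 * V + 1) * (2 * V * τ) ^ m : ℕ) : ℝ) := by exact_mod_cast hNat
    refine h'.trans (le_of_eq ?_)
    push_cast
    ring
  have hV1 : (1:ℝ) ≤ (V:ℝ) := by exact_mod_cast hV
  have hq0 : (0:ℝ) ≤ (q:ℝ) := Nat.cast_nonneg q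
  have hτle : (τ:ℝ) ≤ C0 * (q:ℝ) ^ (ε / m) := hC0 q hq
  have hqδ : ((q:ℝ) ^ (ε / m)) ^ m = (q:ℝ) ^ ε := by
    rw [← Real.rpow_natCast ((q:ℝ) ^ (ε / m)) m, ← Real.rpow_mul hq0]
    congr 1
    have hm0 : (m:ℝ) ≠ 0 := by positivity
    field_simp
  have hqε : (q:ℝ) ^ ε ≤ ((q:ℝ) * (V:ℝ)) ^ ε := by
    apply Real.rpow_le_rpow hq0 _ hε.le
    nlinarith
  calc (S : ℝ) ≤ (2 * (V:ℝ) + 1) * (2 * (V:ℝ) * (τ:ℝ)) ^ m := hNatR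
    _ ≤ (3 * (V:ℝ)) * (2 * (V:ℝ) * (C0 * (q:ℝ) ^ (ε / m))) ^ m := by
        have h1 : (2 * (V:ℝ) + 1) ≤ 3 * (V:ℝ) := by linarith
        have h2 : (2 * (V:ℝ) * (τ:ℝ)) ≤ 2 * (V:ℝ) * (C0 * (q:ℝ) ^ (ε / m)) := by
          apply mul_le_mul_of_nonneg_left hτle
          positivity
        have h3 : (2 * (V:ℝ) * (τ:ℝ)) ^ m ≤ (2 * (V:ℝ) * (C0 * (q:ℝ) ^ (ε / m))) ^ m :=
          pow_le_pow_left₀ (by positivity) h2 m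
        have h4 : (0:ℝ) ≤ (2 * (V:ℝ) * (τ:ℝ)) ^ m := by positivity
        nlinarith [pow_nonneg (show (0:ℝ) ≤ 2 * (V:ℝ) * (C0 * (q:ℝ) ^ (ε / m)) by positivity) m]
    _ = 3 * 2 ^ m * C0 ^ m * ((V:ℝ) ^ (m + 1)) * ((q:ℝ) ^ (ε / m)) ^ m := by ring
    _ = 3 * 2 ^ m * C0 ^ m * ((V:ℝ) ^ (2 * r)) * (q:ℝ) ^ ε := by rw [hqδ, hm2r]
    _ ≤ 3 * 2 ^ m * C0 ^ m * (V:ℝ) ^ (2 * r) * ((q:ℝ) * (V:ℝ)) ^ ε := by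
        apply mul_le_mul_of_nonneg_left hqε
        positivity
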